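/- (Comparability of intersecting rotations.) Let I be a school matching instance and let ρ≠ρ'∈R(I). (1) If there is a student a∈A(ρ)∩A(ρ'), then ρ and ρ' are comparable in the rotation poset (R(I),⊵); moreover, ρ ▷ ρ' if and only if ρ_+(a) ≻_a ρ'_+(a). (2) If there is a school b∈B(ρ)∩B(ρ'), then ρ and ρ' are comparable in (R(I),⊵); moreover, ρ ▷ ρ' if and only if a' ≻_b a for every a∈ρ_+(b) and every a'∈ρ'_+(b). -/

import Mathlib

open Classical
open scoped ENNReal

noncomputable section

namespace SM

/-- A school matching instance: students `A`, schools `B`, strict preference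
orders over the other side plus the outside option `∅` (encoded as `none`),
and quotas `q b ≤ |A|`. -/
structure SchoolInstance (A B : Type) [Fintype A] [Fintype B] where
  prefA : A → Option B → Option B → Prop
  prefB : B → Option A → Option A → Prop
  prefA_sto : ∀ a, IsStrictTotalOrder (Option B) (prefA a)
  prefB_sto : ∀ b, IsStrictTotalOrder (Option A) (prefB b)
  q : B → ℕ
  q_le : ∀ b, q b ≤ Fintype.card A

variable {A B : Type} [Fintype A] [Fintype B] [DecidableEq A] [DecidableEq B]

/-- A matching: every student is assigned a school or the outside option, and
each school receives at most `q b` students.  (A school is implicitly paired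
with the outside option exactly when it has strictly fewer than `q b`
students, and a student is paired with the outside option exactly when it has
no school; this determines the set of pairs of the matching.) -/
structure Matching {A B : Type} [Fintype A] [Fintype B] (I : SchoolInstance A B) where
  toFun : A → Option B
  quota : ∀ b : B, (Finset.univ.filter fun a => toFun a = some b).card ≤ I.q b

instance (I : SchoolInstance A B) : Nonempty (Matching I) := by
  refine ⟨⟨fun _ => none, fun b => ?_⟩⟩
  have h : (Finset.univ.filter fun _ : A => (none : Option B) = some b) = ∅ :=
    Finset.filter_false_of_mem (by intro a _; simp)
  rw [h, Finset.card_empty]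
  exact Nat.zero_le _

/-- The students assigned to school `b`. -/
def assignedTo (I : SchoolInstance A B) (M : Matching I) (b : B) : Finset A :=
  Finset.univ.filter fun a => M.toFun a = some b

/-- School `b` has strictly fewer than `q b` students, i.e. is also paired
with the outside option. -/
def hasSlack (I : SchoolInstance A B) (M : Matching I) (b : B) : Prop :=
  (assignedTo I M b).card < I.q b

/-- `x ∈ M(b)`: the partners of school `b` (students assigned to it, plus the
outside option when it is under quota). -/
def inPartners (I : SchoolInstance A B) (M : Matching I) (b : B) (x : Option A) : Prop :=
  (∃ a : A, x = some a ∧ M.toFun a = some b) ∨ (x = none ∧ hasSlack I M b)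

/-- `M(b)` as a set. -/
def partnersSet (I : SchoolInstance A B) (M : Matching I) (b : B) : Set (Option A) :=
  {x | inPartners I M b x}

/-- The pair `ab` blocks `M`. -/
def BlocksPair (I : SchoolInstance A B) (M : Matching I) (a : A) (b : B) : Prop :=
  I.prefA a (some b) (M.toFun a) ∧ ∃ x, inPartners I M b x ∧ I.prefB b (some a) x

/-- Student `a` blocks `M` (prefers the outside option to its partner). -/
def BlocksStudent (I : SchoolInstance A B) (M : Matching I) (a : A) : Prop :=
  I.prefA a none (M.toFun a)

/-- School `b` blocks `M` (prefers the outside option to one of its partners). -/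
def BlocksSchool (I : SchoolInstance A B) (M : Matching I) (b : B) : Prop :=
  ∃ a : A, M.toFun a = some b ∧ I.prefB b none (some a)

/-- Stability: no blocking pair and no blocking agent. -/
def Stable (I : SchoolInstance A B) (M : Matching I) : Prop :=
  (¬ ∃ a b, BlocksPair I M a b) ∧ (¬ ∃ a, BlocksStudent I M a) ∧ (¬ ∃ b, BlocksSchool I M b)

/-- `M ≥ M'`: every student weakly prefers `M` to `M'`. -/
def matGE (I : SchoolInstance A B) (M M' : Matching I) : Prop :=
  ∀ a : A, M.toFun a = M'.toFun a ∨ I.prefA a (M.toFun a) (M'.toFun a)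

/-- `M' < M` in the student order. -/
def matLT (I : SchoolInstance A B) (M' M : Matching I) : Prop :=
  matGE I M M' ∧ M'.toFun ≠ M.toFun

/-- `M'` is an immediate predecessor of `M` in `(S(I), ≥)`. -/
def ImmPred (I : SchoolInstance A B) (M' M : Matching I) : Prop :=
  Stable I M' ∧ Stable I M ∧ matLT I M' M ∧
    ¬ ∃ M'' : Matching I, Stable I M'' ∧ matLT I M' M'' ∧ matLT I M'' M

/-- The type in which rotations live: pairs `(ρ₊, ρ₋)` of sets of
student/school pairs (with the outside option allowed on either side). -/
abbrev Rot (A B : Type) : Type :=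
  Finset (Option A × Option B) × Finset (Option A × Option B)

/-- The set of pairs of a matching: each student with its partner, and each
under-quota school with the outside option. -/
def pairsOf (I : SchoolInstance A B) (M : Matching I) : Finset (Option A × Option B) :=
  Finset.univ.filter fun p =>
    (∃ a : A, p = (some a, M.toFun a)) ∨ (∃ b : B, hasSlack I M b ∧ p = (none, some b))

/-- The rotation `ρ(M, M') = (M ∖ M', M' ∖ M)`. -/
def rho (I : SchoolInstance A B) (M M' : Matching I) : Rot A B :=
  (pairsOf I M \ pairsOf I M', pairsOf I M' \ pairsOf I M)

/-- `R(I)`: the set of all rotations of `I`. -/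
def RotSet (I : SchoolInstance A B) : Set (Rot A B) :=
  {r | ∃ M M' : Matching I, ImmPred I M' M ∧ r = rho I M M'}

/-- `c` is a maximal chain of stable matchings from `M0` down to `M`:
consecutive entries are immediate predecessors. -/
def chainTo (I : SchoolInstance A B) (M0 M : Matching I) (c : List (Matching I)) : Prop :=
  c.head? = some M0 ∧ c.getLast? = some M ∧ (∀ N ∈ c, Stable I N) ∧
    List.Chain' (fun X Y => ImmPred I Y X) c

/-- The set of rotations eliminated along the chain `c`. -/
def chainRots (I : SchoolInstance A B) (c : List (Matching I)) : Set (Rot A B) :=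
  {r | ∃ (i : ℕ) (X Y : Matching I), getElem? c i = some X ∧ getElem? c (i + 1) = some Y ∧ r = rho I X Y}

/-- `ρ` is exposed in `M`. -/
def Exposed (I : SchoolInstance A B) (r : Rot A B) (M : Matching I) : Prop :=
  ∃ M', ImmPred I M' M ∧ r = rho I M M'

/-- The rotation poset `ρ ⊵ ρ'` (relative to the rotation-set map `RM`):
either `ρ = ρ'`, or `ρ ∈ R_M` for every stable `M` in which `ρ'` is exposed. -/
def domRel (I : SchoolInstance A B) (RM : Matching I → Set (Rot A B)) (r r' : Rot A B) : Prop :=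
  r = r' ∨ ∀ M, Stable I M → Exposed I r' M → r ∈ RM M

/-- `ρ ▷ ρ'`. -/
def strictDom (I : SchoolInstance A B) (RM : Matching I → Set (Rot A B)) (r r' : Rot A B) : Prop :=
  domRel I RM r r' ∧ r ≠ r'

/-- `R ⊆ R(I)` is upper-closed in the rotation poset. -/
def UpperClosed (I : SchoolInstance A B) (RM : Matching I → Set (Rot A B))
    (R : Set (Rot A B)) : Prop :=
  R ⊆ RotSet I ∧ ∀ r' ∈ R, ∀ r ∈ RotSet I, domRel I RM r r' → r ∈ R

/-- `N` is the join `M ∨ M'` (least upper bound) in `(S(I), ≥)`. -/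
def IsJoin (I : SchoolInstance A B) (M M' N : Matching I) : Prop :=
  Stable I N ∧ matGE I N M ∧ matGE I N M' ∧
    ∀ P, Stable I P → matGE I P M → matGE I P M' → matGE I P N

/-- `N` is the meet `M ∧ M'` (greatest lower bound) in `(S(I), ≥)`. -/
def IsMeet (I : SchoolInstance A B) (M M' N : Matching I) : Prop :=
  Stable I N ∧ matGE I M N ∧ matGE I M' N ∧
    ∀ P, Stable I P → matGE I M P → matGE I M' P → matGE I N P

/-- `F` is a (nonempty) sublattice of the lattice of stable matchings. -/
def IsSublattice (I : SchoolInstance A B) (F : Set (Matching I)) : Prop :=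
  F.Nonempty ∧ (∀ M ∈ F, Stable I M) ∧
    (∀ M ∈ F, ∀ M' ∈ F, ∃ N ∈ F, IsJoin I M M' N) ∧
    (∀ M ∈ F, ∀ M' ∈ F, ∃ N ∈ F, IsMeet I M M' N)

/-- `ρ ~ ρ'`: the two rotations are eliminated together in every matching of `F`. -/
def rotEquiv (I : SchoolInstance A B) (RM : Matching I → Set (Rot A B))
    (F : Set (Matching I)) (r r' : Rot A B) : Prop :=
  ∀ M ∈ F, (r ∈ RM M ↔ r' ∈ RM M)

/-- The trivial meta-rotation `θ₀^F` of rotations eliminated in every matching of `F`. -/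
def theta0 (I : SchoolInstance A B) (RM : Matching I → Set (Rot A B))
    (F : Set (Matching I)) : Set (Rot A B) :=
  {r | r ∈ RotSet I ∧ ∀ M ∈ F, r ∈ RM M}

/-- The trivial meta-rotation `θ_z^F` of rotations eliminated in no matching of `F`. -/
def thetaZ (I : SchoolInstance A B) (RM : Matching I → Set (Rot A B))
    (F : Set (Matching I)) : Set (Rot A B) :=
  {r | r ∈ RotSet I ∧ ∀ M ∈ F, r ∉ RM M}

/-- `θ` is a meta-rotation of `F` (an equivalence class of `~`). -/
def IsMetaRot (I : SchoolInstance A B) (RM : Matching I → Set (Rot A B))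
    (F : Set (Matching I)) (θ : Set (Rot A B)) : Prop :=
  ∃ r ∈ RotSet I, θ = {r' | r' ∈ RotSet I ∧ rotEquiv I RM F r r'}

/-- `θ` is a proper meta-rotation of `F`. -/
def IsProperMeta (I : SchoolInstance A B) (RM : Matching I → Set (Rot A B))
    (F : Set (Matching I)) (θ : Set (Rot A B)) : Prop :=
  IsMetaRot I RM F θ ∧ θ ≠ theta0 I RM F ∧ θ ≠ thetaZ I RM F

/-- `θ ⊵^F θ'` on (proper) meta-rotations. -/
def metaDom (I : SchoolInstance A B) (RM : Matching I → Set (Rot A B))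
    (F : Set (Matching I)) (θ θ' : Set (Rot A B)) : Prop :=
  ∀ M ∈ F, θ' ⊆ RM M → θ ⊆ RM M

/-- `Θ_M`: the set of proper meta-rotations contained in `R_M`. -/
def ThetaM (I : SchoolInstance A B) (RM : Matching I → Set (Rot A B))
    (F : Set (Matching I)) (M : Matching I) : Set (Set (Rot A B)) :=
  {θ | IsProperMeta I RM F θ ∧ θ ⊆ RM M}

/-- `Θ` is an upper-closed set of proper meta-rotations. -/
def UCProper (I : SchoolInstance A B) (RM : Matching I → Set (Rot A B))
    (F : Set (Matching I)) (Θ : Set (Set (Rot A B))) : Prop :=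
  (∀ θ ∈ Θ, IsProperMeta I RM F θ) ∧
    ∀ θ' ∈ Θ, ∀ θ, IsProperMeta I RM F θ → metaDom I RM F θ θ' → θ ∈ Θ

/-- `M_R`: the stable matching whose rotation set is `R` (via definite description). -/
def MofR (I : SchoolInstance A B) (RM : Matching I → Set (Rot A B))
    (R : Set (Rot A B)) : Matching I :=
  Classical.epsilon fun M => Stable I M ∧ RM M = R

/-- `R^θ = θ₀^F ∪ ⋃ {θ' proper : θ' ⊵^F θ}`. -/
def Rup (I : SchoolInstance A B) (RM : Matching I → Set (Rot A B))
    (F : Set (Matching I)) (θ : Set (Rot A B)) : Set (Rot A B) :=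
  theta0 I RM F ∪ ⋃₀ {θ' | IsProperMeta I RM F θ' ∧ metaDom I RM F θ' θ}

/-- `R_θ = θ₀^F ∪ ⋃ {θ' proper : θ' ▷^F θ}`. -/
def Rdn (I : SchoolInstance A B) (RM : Matching I → Set (Rot A B))
    (F : Set (Matching I)) (θ : Set (Rot A B)) : Set (Rot A B) :=
  theta0 I RM F ∪ ⋃₀ {θ' | IsProperMeta I RM F θ' ∧ metaDom I RM F θ' θ ∧ θ' ≠ θ}

/-- `M^θ`. -/
def Mup (I : SchoolInstance A B) (RM : Matching I → Set (Rot A B))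
    (F : Set (Matching I)) (θ : Set (Rot A B)) : Matching I :=
  MofR I RM (Rup I RM F θ)

/-- `M_θ`. -/
def Mdn (I : SchoolInstance A B) (RM : Matching I → Set (Rot A B))
    (F : Set (Matching I)) (θ : Set (Rot A B)) : Matching I :=
  MofR I RM (Rdn I RM F θ)

/-- The meet `M ∧ M'` in the lattice of stable matchings (via definite description). -/
def meetM (I : SchoolInstance A B) (M M' : Matching I) : Matching I :=
  Classical.epsilon fun N => IsMeet I M M' N

/-- First order differential `∂f_θ = f(M^θ) − f(M_θ)`. -/
def d1 (I : SchoolInstance A B) (RM : Matching I → Set (Rot A B))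
    (F : Set (Matching I)) (f : Matching I → ℝ) (θ : Set (Rot A B)) : ℝ :=
  f (Mup I RM F θ) - f (Mdn I RM F θ)

/-- Second order differential
`∂²f_{θ,θ'} = f(M^θ ∧ M_{θ'}) + f(M_θ ∧ M^{θ'}) − f(M_θ ∧ M_{θ'}) − f(M^θ ∧ M^{θ'})`. -/
def d2 (I : SchoolInstance A B) (RM : Matching I → Set (Rot A B))
    (F : Set (Matching I)) (f : Matching I → ℝ) (θ θ' : Set (Rot A B)) : ℝ :=
  f (meetM I (Mup I RM F θ) (Mdn I RM F θ')) + f (meetM I (Mdn I RM F θ) (Mup I RM F θ'))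
    - f (meetM I (Mdn I RM F θ) (Mdn I RM F θ')) - f (meetM I (Mup I RM F θ) (Mup I RM F θ'))

/-- The greatest element `M₀^F` of `F` (via definite description). -/
def topF (I : SchoolInstance A B) (F : Set (Matching I)) : Matching I :=
  Classical.epsilon fun N => N ∈ F ∧ ∀ P ∈ F, matGE I N P

/-- Vertices of the digraph: all rotations, plus a source `s` and sink `t`. -/
abbrev Vtx (A B : Type) : Type := Rot A B ⊕ Bool

/-- The source `s`. -/
def srcV : Vtx A B := Sum.inr true

/-- The sink `t`. -/
def tgtV : Vtx A B := Sum.inr false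

/-- The value of the cut `S` for the capacity function `u`: the total capacity
of the arcs leaving `S`. -/
def cutVal (u : Vtx A B → Vtx A B → ℝ≥0∞) (S : Set (Vtx A B)) : ℝ≥0∞ :=
  ∑ p : Vtx A B × Vtx A B, if p.1 ∈ S ∧ p.2 ∉ S then u p.1 p.2 else 0

/-- The `s`-`t` cut `{s} ∪ R`. -/
def cutOf (R : Set (Rot A B)) : Set (Vtx A B) := insert srcV (Sum.inl '' R)

/-- `(u, C)` witnesses minimum cut representability of `Π(f, F)`: for every
`R ⊆ R(I)`, the cut `{s} ∪ R` has finite capacity iff `R` is upper-closed and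
`M_R ∈ F`, and in that case its value is `f(M_R) + C`. -/
def MinCutRepWith (I : SchoolInstance A B) (RM : Matching I → Set (Rot A B))
    (F : Set (Matching I)) (f : Matching I → ℝ)
    (u : Vtx A B → Vtx A B → ℝ≥0∞) (C : ℝ) : Prop :=
  ∀ R : Set (Rot A B), R ⊆ RotSet I →
    ((cutVal u (cutOf R) ≠ ⊤ ↔
        (UpperClosed I RM R ∧ ∃ M, Stable I M ∧ RM M = R ∧ M ∈ F)) ∧
      (∀ M, Stable I M → RM M = R → M ∈ F → (cutVal u (cutOf R)).toReal = f M + C))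

/-- The problem `Π(f, F)` is minimum cut representable. -/
def MinCutRep (I : SchoolInstance A B) (RM : Matching I → Set (Rot A B))
    (F : Set (Matching I)) (f : Matching I → ℝ) : Prop :=
  ∃ u C, MinCutRepWith I RM F f u C

/-- The cut digraph `D^{f,F}` (with representative rotations `rep` and
constant `γ`); capacities of parallel arcs are added. -/
def cutDigraph (I : SchoolInstance A B) (RM : Matching I → Set (Rot A B))
    (F : Set (Matching I)) (f : Matching I → ℝ)
    (rep : Set (Rot A B) → Rot A B) (γ : ℝ) : Vtx A B → Vtx A B → ℝ≥0∞ :=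
  fun x y =>
    (if ∃ θ, IsMetaRot I RM F θ ∧ ∃ r ∈ θ, ∃ r' ∈ θ, r ≠ r' ∧ x = Sum.inl r ∧ y = Sum.inl r'
      then ⊤ else 0)
    + (if ∃ θ θ', IsProperMeta I RM F θ ∧ IsProperMeta I RM F θ' ∧ θ ≠ θ' ∧
          metaDom I RM F θ' θ ∧ x = Sum.inl (rep θ) ∧ y = Sum.inl (rep θ')
        then ⊤ else 0)
    + (∑ θ : Set (Rot A B), ∑ θ' : Set (Rot A B),
        if IsProperMeta I RM F θ ∧ IsProperMeta I RM F θ' ∧ θ ≠ θ' ∧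
            x = Sum.inl (rep θ) ∧ y = Sum.inl (rep θ')
        then ENNReal.ofReal ((1 / 2) * d2 I RM F f θ θ') else 0)
    + (if (theta0 I RM F).Nonempty ∧ x = srcV ∧ y = Sum.inl (rep (theta0 I RM F))
        then ⊤ else 0)
    + (if (thetaZ I RM F).Nonempty ∧ x = Sum.inl (rep (thetaZ I RM F)) ∧ y = tgtV
        then ⊤ else 0)
    + (∑ θ : Set (Rot A B),
        if IsProperMeta I RM F θ ∧ x = Sum.inl (rep θ) ∧ y = tgtV
        then ENNReal.ofReal (d1 I RM F f θ -
          (1 / 2) * (∑ θ' : Set (Rot A B),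
            if IsProperMeta I RM F θ' ∧ θ' ≠ θ then d2 I RM F f θ θ' else 0) + γ)
        else 0)
    + (∑ θ : Set (Rot A B),
        if IsProperMeta I RM F θ ∧ x = srcV ∧ y = Sum.inl (rep θ)
        then ENNReal.ofReal γ else 0)

/-- `b` prefers `S'` to `S''`: every member of `S'` is preferred to every
member of `S'' ∖ S'`. -/
def prefersSet (I : SchoolInstance A B) (b : B) (S' S'' : Set (Option A)) : Prop :=
  ∀ x ∈ S', ∀ y ∈ S'', y ∉ S' → I.prefB b x y

/-- `A(ρ)`: students appearing in `ρ₊`. -/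
def Aof (r : Rot A B) : Set A := {a | ∃ b : B, (some a, some b) ∈ r.1}

/-- `B(ρ)`: schools appearing in `ρ₊`. -/
def Bof (r : Rot A B) : Set B := {b | ∃ a : A, (some a, some b) ∈ r.1}

/-- `ρ₊(b)`: students matched to `b` in `ρ₊`. -/
def rhoPlusB (r : Rot A B) (b : B) : Set A := {a | (some a, some b) ∈ r.1}

/-- `R^ρ = {ρ' : ρ' ⊵ ρ}`. -/
def RupRot (I : SchoolInstance A B) (RM : Matching I → Set (Rot A B))
    (r : Rot A B) : Set (Rot A B) :=
  {r' | r' ∈ RotSet I ∧ domRel I RM r' r}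

/-- `R_ρ = {ρ' : ρ' ▷ ρ}`. -/
def RdnRot (I : SchoolInstance A B) (RM : Matching I → Set (Rot A B))
    (r : Rot A B) : Set (Rot A B) :=
  {r' | r' ∈ RotSet I ∧ strictDom I RM r' r}

/-- `M^ρ`. -/
def MupRot (I : SchoolInstance A B) (RM : Matching I → Set (Rot A B))
    (r : Rot A B) : Matching I :=
  MofR I RM (RupRot I RM r)

/-- `M_ρ`. -/
def MdnRot (I : SchoolInstance A B) (RM : Matching I → Set (Rot A B))
    (r : Rot A B) : Matching I :=
  MofR I RM (RdnRot I RM r)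

/-- First order differential of `f` at a rotation: `∂f_ρ = f(M^ρ) − f(M_ρ)`. -/
def d1Rot (I : SchoolInstance A B) (RM : Matching I → Set (Rot A B))
    (f : Matching I → ℝ) (r : Rot A B) : ℝ :=
  f (MupRot I RM r) - f (MdnRot I RM r)

/-- Second order differential of `f` at a pair of distinct rotations. -/
def d2Rot (I : SchoolInstance A B) (RM : Matching I → Set (Rot A B))
    (f : Matching I → ℝ) (r r' : Rot A B) : ℝ :=
  f (meetM I (MupRot I RM r) (MdnRot I RM r')) + f (meetM I (MdnRot I RM r) (MupRot I RM r'))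
    - f (meetM I (MdnRot I RM r) (MdnRot I RM r'))
    - f (meetM I (MupRot I RM r) (MupRot I RM r'))

/-- The pair `(ρ_in, ρ_out)` characterizes the stable matchings assigning both
siblings `a, ā` to school `b`. -/
def siblingChar (I : SchoolInstance A B) (RM : Matching I → Set (Rot A B))
    (a abar : A) (b : B) (p : Rot A B × Rot A B) : Prop :=
  ∀ M : Matching I, Stable I M →
    ((M.toFun a = some b ∧ M.toFun abar = some b) ↔ (p.1 ∈ RM M ∧ p.2 ∉ RM M))

/-- Some stable matching assigns both `a` and `ā` to `b`. -/
def goodSchool (I : SchoolInstance A B) (a abar : A) (b : B) : Prop :=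
  ∃ M, Stable I M ∧ M.toFun a = some b ∧ M.toFun abar = some b

/-- The pair `(ρ_in(a,ā,b), ρ_out(a,ā,b))` (via definite description). -/
def siblingPair (I : SchoolInstance A B) (RM : Matching I → Set (Rot A B))
    (a abar : A) (b : B) : Rot A B × Rot A B :=
  Classical.epsilon fun p => p.1 ∈ RotSet I ∧ p.2 ∈ RotSet I ∧
    siblingChar I RM a abar b p ∧ strictDom I RM p.1 p.2

/-- `R_in(a, ā)`. -/
def Rin (I : SchoolInstance A B) (RM : Matching I → Set (Rot A B))
    (a abar : A) : Set (Rot A B) :=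
  {r | ∃ b, goodSchool I a abar b ∧ r = (siblingPair I RM a abar b).1}

/-- `R_out(a, ā)`. -/
def Rout (I : SchoolInstance A B) (RM : Matching I → Set (Rot A B))
    (a abar : A) : Set (Rot A B) :=
  {r | ∃ b, goodSchool I a abar b ∧ r = (siblingPair I RM a abar b).2}

/-- The indicator function: `0` when the siblings are matched to the same
school, `1` otherwise. -/
def sibIndicator (I : SchoolInstance A B) (a abar : A) : Matching I → ℝ :=
  fun M => if M.toFun a = M.toFun abar then 0 else 1

end SM

namespace SM

variable {A B : Type} [Fintype A] [Fintype B] [DecidableEq A] [DecidableEq B]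

set_option linter.unusedSectionVars false
set_option maxHeartbeats 1000000

-- ## preference basics
section PrefBasics
variable (I : SchoolInstance A B)

theorem prefA_trans {a : A} {x y z : Option B} (h : I.prefA a x y) (h' : I.prefA a y z) :
    I.prefA a x z := (I.prefA_sto a).trans x y z h h'

theorem prefA_irrefl {a : A} (x : Option B) : ¬ I.prefA a x x := (I.prefA_sto a).irrefl x

theorem prefA_asymm {a : A} {x y : Option B} (h : I.prefA a x y) : ¬ I.prefA a y x :=
  fun h' => prefA_irrefl I x (prefA_trans I h h')

theorem prefA_tricho {a : A} (x y : Option B) :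
    I.prefA a x y ∨ x = y ∨ I.prefA a y x := by
  by_cases h1 : I.prefA a x y
  · exact Or.inl h1
  by_cases h2 : I.prefA a y x
  · exact Or.inr (Or.inr h2)
  exact Or.inr (Or.inl ((I.prefA_sto a).trichotomous x y h1 h2))

theorem prefB_trans {b : B} {x y z : Option A} (h : I.prefB b x y) (h' : I.prefB b y z) :
    I.prefB b x z := (I.prefB_sto b).trans x y z h h'

theorem prefB_irrefl {b : B} (x : Option A) : ¬ I.prefB b x x := (I.prefB_sto b).irrefl x

theorem prefB_asymm {b : B} {x y : Option A} (h : I.prefB b x y) : ¬ I.prefB b y x :=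
  fun h' => prefB_irrefl I x (prefB_trans I h h')

theorem prefB_tricho {b : B} (x y : Option A) :
    I.prefB b x y ∨ x = y ∨ I.prefB b y x := by
  by_cases h1 : I.prefB b x y
  · exact Or.inl h1
  by_cases h2 : I.prefB b y x
  · exact Or.inr (Or.inr h2)
  exact Or.inr (Or.inl ((I.prefB_sto b).trichotomous x y h1 h2))

/-- weak preference `x ⪰_a y`. -/
def pge (a : A) (x y : Option B) : Prop := x = y ∨ I.prefA a x y

theorem pge_refl (a : A) (x : Option B) : pge I a x x := Or.inl rfl

theorem pge_trans {a : A} {x y z : Option B} (h : pge I a x y) (h' : pge I a y z) :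
    pge I a x z := by
  rcases h with rfl | h
  · exact h'
  rcases h' with rfl | h'
  · exact Or.inr h
  · exact Or.inr (prefA_trans I h h')

theorem pge_antisymm {a : A} {x y : Option B} (h : pge I a x y) (h' : pge I a y x) : x = y := by
  rcases h with rfl | h
  · rfl
  rcases h' with rfl | h'
  · rfl
  · exact absurd h' (prefA_asymm I h)

theorem pge_total (a : A) (x y : Option B) : pge I a x y ∨ pge I a y x := by
  rcases prefA_tricho I (a := a) x y with h | rfl | h
  · exact Or.inl (Or.inr h)
  · exact Or.inl (Or.inl rfl)
  · exact Or.inr (Or.inr h)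

theorem not_pge_iff {a : A} {x y : Option B} : ¬ pge I a x y ↔ I.prefA a y x := by
  constructor
  · intro h
    rcases prefA_tricho I (a := a) x y with h' | rfl | h'
    · exact absurd (Or.inr h') h
    · exact absurd (Or.inl rfl) h
    · exact h'
  · intro h h'
    rcases h' with rfl | h'
    · exact prefA_irrefl I x h
    · exact prefA_asymm I h' h

theorem prefA_of_prefA_of_pge {a : A} {x y z : Option B}
    (h : I.prefA a x y) (h' : pge I a y z) : I.prefA a x z := by
  rcases h' with rfl | h' <;> [exact h; exact prefA_trans I h h']

theorem prefA_of_pge_of_prefA {a : A} {x y z : Option B}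
    (h : pge I a x y) (h' : I.prefA a y z) : I.prefA a x z := by
  rcases h with rfl | h <;> [exact h'; exact prefA_trans I h h']

end PrefBasics

-- ## matching basics
section MatchBasics
variable {I : SchoolInstance A B}

theorem Matching.ext' {M N : Matching I} (h : M.toFun = N.toFun) : M = N := by
  cases M; cases N; simp_all

theorem matGE_refl (M : Matching I) : matGE I M M := fun _ => Or.inl rfl

theorem matGE_pge {M N : Matching I} (h : matGE I M N) (a : A) :
    pge I a (M.toFun a) (N.toFun a) := h a

theorem matGE_trans {M N P : Matching I} (h : matGE I M N) (h' : matGE I N P) :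
    matGE I M P := fun a => pge_trans I (h a) (h' a)

theorem matGE_antisymm {M N : Matching I} (h : matGE I M N) (h' : matGE I N M) : M = N :=
  Matching.ext' (funext fun a => pge_antisymm I (h a) (h' a))

theorem mem_assignedTo {M : Matching I} {b : B} {a : A} :
    a ∈ assignedTo I M b ↔ M.toFun a = some b := by
  simp [assignedTo]

theorem inPartners_of_assigned {M : Matching I} {b : B} {a : A}
    (h : M.toFun a = some b) : inPartners I M b (some a) :=
  Or.inl ⟨a, rfl, h⟩

/-- Stability consequence: if `a` strictly prefers `b` to its partner then every
partner of `b` is preferred to `a`. -/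
theorem stable_pref_partner {M : Matching I} (hM : Stable I M) {a : A} {b : B}
    (h : I.prefA a (some b) (M.toFun a)) :
    ∀ x, inPartners I M b x → I.prefB b x (some a) := by
  intro x hx
  have hnb : ¬ BlocksPair I M a b := fun hb => hM.1 ⟨a, b, hb⟩
  have hnp : ¬ I.prefB b (some a) x := fun hp => hnb ⟨h, x, hx, hp⟩
  rcases prefB_tricho I (b := b) x (some a) with h' | h' | h'
  · exact h'
  · exfalso
    subst h'
    rcases hx with ⟨a', ha', h2⟩ | ⟨h1, _⟩
    · obtain rfl : a' = a := by injection ha' with h3; exact h3.symm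
      rw [h2] at h
      exact prefA_irrefl I _ h
    · exact absurd h1 (by simp)
  · exact absurd h' hnp

/-- a matched student is acceptable to its school. -/
theorem stable_acceptable {M : Matching I} (hM : Stable I M) {a : A} {b : B}
    (h : M.toFun a = some b) : I.prefB b (some a) none := by
  have hnb : ¬ BlocksSchool I M b := fun hb => hM.2.2 ⟨b, hb⟩
  have : ¬ I.prefB b none (some a) := fun hp => hnb ⟨a, h, hp⟩
  rcases prefB_tricho I (b := b) (some a) none with h' | h' | h'
  · exact h'
  · exact absurd h' (by simp)
  · exact absurd h' this

theorem stable_pge_none {M : Matching I} (hM : Stable I M) (a : A) :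
    pge I a (M.toFun a) none := by
  have : ¬ I.prefA a none (M.toFun a) := fun hp => hM.2.1 ⟨a, hp⟩
  rcases prefA_tricho I (a := a) (M.toFun a) none with h' | h' | h'
  · exact Or.inr h'
  · exact Or.inl h'
  · exact absurd h' this

theorem assignedTo_card_le {M : Matching I} (b : B) :
    (assignedTo I M b).card ≤ I.q b := by
  refine le_trans (Finset.card_le_card ?_) (M.quota b)
  intro x hx
  simp only [assignedTo, Finset.mem_filter] at hx ⊢
  exact hx

/-- Stability: if `a` strictly prefers `b` and is acceptable to `b`, then `b` is full. -/
theorem stable_full {M : Matching I} (hM : Stable I M) {a : A} {b : B}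
    (h : I.prefA a (some b) (M.toFun a)) (hacc : I.prefB b (some a) none) :
    (assignedTo I M b).card = I.q b := by
  by_contra hne
  have hq : (assignedTo I M b).card ≤ I.q b := assignedTo_card_le _
  have hsl : hasSlack I M b := lt_of_le_of_ne hq hne
  have := stable_pref_partner hM h none (Or.inr ⟨rfl, hsl⟩)
  exact prefB_asymm I hacc this

end MatchBasics

-- ## fibers and matching construction
section Fibers
variable {I : SchoolInstance A B}

/-- the set of students that `f` assigns to `b`. -/
def fiber (f : A → Option B) (b : B) : Finset A := Finset.univ.filter fun a => f a = some b

/-- the set of students unassigned by `f`. -/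
def fiberN (f : A → Option B) : Finset A := Finset.univ.filter fun a => f a = none

theorem mem_fiber {f : A → Option B} {b : B} {a : A} : a ∈ fiber f b ↔ f a = some b := by
  simp [fiber]

theorem mem_fiberN {f : A → Option B} {a : A} : a ∈ fiberN f ↔ f a = none := by
  simp [fiberN]

theorem assignedTo_eq_fiber (M : Matching I) (b : B) :
    assignedTo I M b = fiber M.toFun b :=
  Finset.ext fun x => by simp [assignedTo, fiber]

theorem hasSlack_iff {M : Matching I} {b : B} :
    hasSlack I M b ↔ (fiber M.toFun b).card < I.q b := by
  rw [hasSlack, assignedTo_eq_fiber]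

/-- build a matching from a function with quota bound. -/
def mkM (f : A → Option B) (h : ∀ b, (fiber f b).card ≤ I.q b) : Matching I := by
  refine ⟨f, fun b => le_trans (Finset.card_le_card ?_) (h b)⟩
  intro x hx
  simp only [Finset.mem_filter] at hx
  exact mem_fiber.mpr hx.2

@[simp] theorem mkM_toFun (f : A → Option B) (h : ∀ b, (fiber f b).card ≤ I.q b) :
    (mkM (I := I) f h).toFun = f := rfl

theorem card_partition (f : A → Option B) :
    (fiberN f).card + ∑ b : B, (fiber f b).card = Fintype.card A := by
  classical
  have key : ∀ a : A,
      ((if f a = none then 1 else 0) + ∑ b : B, (if f a = some b then 1 else 0)) = 1 := by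
    intro a
    cases hfa : f a with
    | none => simp [hfa]
    | some b0 => simp [hfa, Finset.sum_ite_eq]
  have h2 : (fiberN f).card + ∑ b : B, (fiber f b).card
      = ∑ a : A, ((if f a = none then 1 else 0) + ∑ b : B, (if f a = some b then 1 else 0)) := by
    rw [Finset.sum_add_distrib]
    congr 1
    · exact Finset.card_filter _ _
    · rw [Finset.sum_comm]
      exact Finset.sum_congr rfl (fun b _ => Finset.card_filter _ _)
  have h3 : (∑ a : A, ((if f a = none then 1 else 0)
      + ∑ b : B, (if f a = some b then 1 else 0))) = ∑ _a : A, 1 :=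
    Finset.sum_congr rfl (fun a _ => key a)
  rw [h2, h3, Finset.sum_const, smul_eq_mul, mul_one, Finset.card_univ]

end Fibers

-- ## join and meet of stable matchings
section Lattice
variable {I : SchoolInstance A B}

instance : Finite (Matching I) :=
  Finite.of_injective (fun M : Matching I => M.toFun) (fun _ _ h => Matching.ext' h)

def joinFun (M N : Matching I) : A → Option B := fun a =>
  if pge I a (M.toFun a) (N.toFun a) then M.toFun a else N.toFun a

def meetFun (M N : Matching I) : A → Option B := fun a =>
  if pge I a (M.toFun a) (N.toFun a) then N.toFun a else M.toFun a

theorem joinFun_cases (M N : Matching I) (a : A) :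
    (joinFun M N a = M.toFun a ∧ meetFun M N a = N.toFun a) ∨
      (joinFun M N a = N.toFun a ∧ meetFun M N a = M.toFun a) := by
  by_cases h : pge I a (M.toFun a) (N.toFun a) <;>
    simp [joinFun, meetFun, h]

theorem pge_joinFun_left (M N : Matching I) (a : A) :
    pge I a (joinFun M N a) (M.toFun a) := by
  by_cases h : pge I a (M.toFun a) (N.toFun a)
  · rw [show joinFun M N a = M.toFun a from if_pos h]
    exact pge_refl I a _
  · rw [show joinFun M N a = N.toFun a from if_neg h]
    exact (pge_total I a _ _).resolve_left h

theorem pge_joinFun_right (M N : Matching I) (a : A) :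
    pge I a (joinFun M N a) (N.toFun a) := by
  by_cases h : pge I a (M.toFun a) (N.toFun a)
  · rw [show joinFun M N a = M.toFun a from if_pos h]
    exact h
  · rw [show joinFun M N a = N.toFun a from if_neg h]
    exact pge_refl I a _

theorem pge_meetFun_left (M N : Matching I) (a : A) :
    pge I a (M.toFun a) (meetFun M N a) := by
  by_cases h : pge I a (M.toFun a) (N.toFun a)
  · rw [show meetFun M N a = N.toFun a from if_pos h]
    exact h
  · rw [show meetFun M N a = M.toFun a from if_neg h]
    exact pge_refl I a _

theorem pge_meetFun_right (M N : Matching I) (a : A) :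
    pge I a (N.toFun a) (meetFun M N a) := by
  by_cases h : pge I a (M.toFun a) (N.toFun a)
  · rw [show meetFun M N a = N.toFun a from if_pos h]
    exact pge_refl I a _
  · rw [show meetFun M N a = M.toFun a from if_neg h]
    exact (pge_total I a _ _).resolve_left h

theorem fiber_card_le (M : Matching I) (b : B) : (fiber M.toFun b).card ≤ I.q b := by
  rw [← assignedTo_eq_fiber]
  exact assignedTo_card_le b

/-- a student assigned by the join but not by `M` prefers its (N-)school to `M`. -/
theorem join_excess {M N : Matching I} {a : A} {b : B}
    (hj : joinFun M N a = some b) (hm : M.toFun a ≠ some b) :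
    N.toFun a = some b ∧ I.prefA a (some b) (M.toFun a) := by
  rcases joinFun_cases M N a with ⟨h1, _⟩ | ⟨h1, _⟩
  · exact absurd (h1 ▸ hj) hm
  · have hN : N.toFun a = some b := h1 ▸ hj
    have hp : pge I a (some b) (M.toFun a) := by
      have := pge_joinFun_left M N a
      rw [hj] at this
      exact this
    rcases hp with h | h
    · exact absurd h.symm hm
    · exact ⟨hN, h⟩

theorem join_excess' {M N : Matching I} {a : A} {b : B}
    (hj : joinFun M N a = some b) (hm : N.toFun a ≠ some b) :
    M.toFun a = some b ∧ I.prefA a (some b) (N.toFun a) := by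
  rcases joinFun_cases M N a with ⟨h1, _⟩ | ⟨h1, _⟩
  · have hM : M.toFun a = some b := h1 ▸ hj
    have hp : pge I a (some b) (N.toFun a) := by
      have := pge_joinFun_right M N a
      rw [hj] at this
      exact this
    rcases hp with h | h
    · exact absurd h.symm hm
    · exact ⟨hM, h⟩
  · exact absurd (h1 ▸ hj) hm

theorem join_quota {M N : Matching I} (hM : Stable I M) (hN : Stable I N) (b : B) :
    (fiber (joinFun M N) b).card ≤ I.q b := by
  by_contra hq
  push_neg at hq
  classical
  set S' : Finset A := Finset.univ.filter
    (fun a => N.toFun a = some b ∧ I.prefA a (some b) (M.toFun a)) with hS'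
  set T' : Finset A := Finset.univ.filter
    (fun a => M.toFun a = some b ∧ I.prefA a (some b) (N.toFun a)) with hT'
  have hsubS : fiber (joinFun M N) b ⊆ fiber M.toFun b ∪ S' := by
    intro a ha
    have hj := mem_fiber.mp ha
    by_cases hm : M.toFun a = some b
    · exact Finset.mem_union_left _ (mem_fiber.mpr hm)
    · refine Finset.mem_union_right _ ?_
      rw [hS', Finset.mem_filter]
      exact ⟨Finset.mem_univ a, join_excess hj hm⟩
  have hsubT : fiber (joinFun M N) b ⊆ fiber N.toFun b ∪ T' := by
    intro a ha
    have hj := mem_fiber.mp ha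
    by_cases hn : N.toFun a = some b
    · exact Finset.mem_union_left _ (mem_fiber.mpr hn)
    · refine Finset.mem_union_right _ ?_
      rw [hT', Finset.mem_filter]
      exact ⟨Finset.mem_univ a, join_excess' hj hn⟩
  have hSne : S'.Nonempty := by
    rw [← Finset.card_pos]
    have h1 : (fiber (joinFun M N) b).card ≤ (fiber M.toFun b).card + S'.card :=
      le_trans (Finset.card_le_card hsubS) (Finset.card_union_le _ _)
    have h2 := fiber_card_le M b
    omega
  have hTne : T'.Nonempty := by
    rw [← Finset.card_pos]
    have h1 : (fiber (joinFun M N) b).card ≤ (fiber N.toFun b).card + T'.card :=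
      le_trans (Finset.card_le_card hsubT) (Finset.card_union_le _ _)
    have h2 := fiber_card_le N b
    omega
  obtain ⟨a₁, ha₁⟩ := hSne
  obtain ⟨a₂, ha₂⟩ := hTne
  rw [hS', Finset.mem_filter] at ha₁
  rw [hT', Finset.mem_filter] at ha₂
  have c1 : I.prefB b (some a₂) (some a₁) :=
    stable_pref_partner hM ha₁.2.2 _ (inPartners_of_assigned ha₂.2.1)
  have c2 : I.prefB b (some a₁) (some a₂) :=
    stable_pref_partner hN ha₂.2.2 _ (inPartners_of_assigned ha₁.2.1)
  exact prefB_asymm I c1 c2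

/-- the join of two stable matchings. -/
def joinM {M N : Matching I} (hM : Stable I M) (hN : Stable I N) : Matching I :=
  mkM (joinFun M N) (join_quota hM hN)

theorem join_none {M N : Matching I} (hM : Stable I M) {a : A}
    (h : joinFun M N a = none) : M.toFun a = none := by
  have hp := pge_joinFun_left M N a
  rw [h] at hp
  rcases hp with hp | hp
  · exact hp.symm
  · exact absurd (show BlocksStudent I M a from hp) (fun hb => hM.2.1 ⟨a, hb⟩)

theorem join_fiber_le {M N : Matching I} (hM : Stable I M) (hN : Stable I N) (b : B) :
    (fiber (joinFun M N) b).card ≤ (fiber M.toFun b).card := by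
  by_cases hsub : fiber (joinFun M N) b ⊆ fiber M.toFun b
  · exact Finset.card_le_card hsub
  · obtain ⟨a, ha, hna⟩ := Finset.not_subset.mp hsub
    have hj := mem_fiber.mp ha
    have hm : M.toFun a ≠ some b := fun h => hna (mem_fiber.mpr h)
    obtain ⟨hNa, hpa⟩ := join_excess hj hm
    have hacc : I.prefB b (some a) none := stable_acceptable hN hNa
    have hfull := stable_full hM hpa hacc
    rw [assignedTo_eq_fiber] at hfull
    rw [hfull]
    exact join_quota hM hN b

theorem join_fiber_eq {M N : Matching I} (hM : Stable I M) (hN : Stable I N) (b : B) :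
    (fiber (joinFun M N) b).card = (fiber M.toFun b).card := by
  have hle : ∀ c ∈ (Finset.univ : Finset B),
      (fiber (joinFun M N) c).card ≤ (fiber M.toFun c).card :=
    fun c _ => join_fiber_le hM hN c
  have hNle : (fiberN (joinFun M N)).card ≤ (fiberN M.toFun).card :=
    Finset.card_le_card (fun a ha => mem_fiberN.mpr (join_none hM (mem_fiberN.mp ha)))
  have h1 := card_partition (joinFun M N)
  have h2 := card_partition M.toFun
  have hsum : (∑ c : B, (fiber M.toFun c).card) ≤ ∑ c : B, (fiber (joinFun M N) c).card := by
    omega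
  have hsum2 : (∑ c : B, (fiber (joinFun M N) c).card) ≤ ∑ c : B, (fiber M.toFun c).card :=
    Finset.sum_le_sum hle
  have heq : (∑ c : B, (fiber (joinFun M N) c).card) = ∑ c : B, (fiber M.toFun c).card :=
    le_antisymm hsum2 hsum
  exact (Finset.sum_eq_sum_iff_of_le hle).mp heq b (Finset.mem_univ b)

theorem join_fiber_eq' {M N : Matching I} (hM : Stable I M) (hN : Stable I N) (b : B) :
    (fiber (joinFun M N) b).card = (fiber N.toFun b).card := by
  have hle : ∀ c ∈ (Finset.univ : Finset B),
      (fiber (joinFun M N) c).card ≤ (fiber N.toFun c).card := by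
    intro c _
    by_cases hsub : fiber (joinFun M N) c ⊆ fiber N.toFun c
    · exact Finset.card_le_card hsub
    · obtain ⟨a, ha, hna⟩ := Finset.not_subset.mp hsub
      have hj := mem_fiber.mp ha
      have hm : N.toFun a ≠ some c := fun h => hna (mem_fiber.mpr h)
      obtain ⟨hMa, hpa⟩ := join_excess' hj hm
      have hacc : I.prefB c (some a) none := stable_acceptable hM hMa
      have hfull := stable_full hN hpa hacc
      rw [assignedTo_eq_fiber] at hfull
      rw [hfull]
      exact join_quota hM hN c
  have hNle : (fiberN (joinFun M N)).card ≤ (fiberN N.toFun).card := by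
    refine Finset.card_le_card (fun a ha => mem_fiberN.mpr ?_)
    have h := mem_fiberN.mp ha
    have hp := pge_joinFun_right M N a
    rw [h] at hp
    rcases hp with hp | hp
    · exact hp.symm
    · exact absurd (show BlocksStudent I N a from hp) (fun hb => hN.2.1 ⟨a, hb⟩)
  have h1 := card_partition (joinFun M N)
  have h2 := card_partition N.toFun
  have hsum : (∑ c : B, (fiber N.toFun c).card) ≤ ∑ c : B, (fiber (joinFun M N) c).card := by
    omega
  have hsum2 : (∑ c : B, (fiber (joinFun M N) c).card) ≤ ∑ c : B, (fiber N.toFun c).card :=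
    Finset.sum_le_sum hle
  exact (Finset.sum_eq_sum_iff_of_le hle).mp (le_antisymm hsum2 hsum) b (Finset.mem_univ b)

theorem fiber_identity (M N : Matching I) (b : B) :
    (fiber (joinFun M N) b).card + (fiber (meetFun M N) b).card
      = (fiber M.toFun b).card + (fiber N.toFun b).card := by
  have e1 : (fiber (joinFun M N) b).card
      = ∑ a : A, if joinFun M N a = some b then 1 else 0 := Finset.card_filter _ _
  have e2 : (fiber (meetFun M N) b).card
      = ∑ a : A, if meetFun M N a = some b then 1 else 0 := Finset.card_filter _ _
  have e3 : (fiber M.toFun b).card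
      = ∑ a : A, if M.toFun a = some b then 1 else 0 := Finset.card_filter _ _
  have e4 : (fiber N.toFun b).card
      = ∑ a : A, if N.toFun a = some b then 1 else 0 := Finset.card_filter _ _
  rw [e1, e2, e3, e4, ← Finset.sum_add_distrib, ← Finset.sum_add_distrib]
  apply Finset.sum_congr rfl
  intro a _
  rcases joinFun_cases M N a with ⟨h1, h2⟩ | ⟨h1, h2⟩ <;> rw [h1, h2]
  exact Nat.add_comm _ _

theorem meet_quota {M N : Matching I} (hM : Stable I M) (hN : Stable I N) (b : B) :
    (fiber (meetFun M N) b).card ≤ I.q b := by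
  have h1 := fiber_identity M N b
  have h2 := join_fiber_eq hM hN b
  have h3 := fiber_card_le N b
  omega

/-- the meet of two stable matchings. -/
def meetMat {M N : Matching I} (hM : Stable I M) (hN : Stable I N) : Matching I :=
  mkM (meetFun M N) (meet_quota hM hN)

theorem meet_fiber_eq {M N : Matching I} (hM : Stable I M) (hN : Stable I N) (b : B) :
    (fiber (meetFun M N) b).card = (fiber M.toFun b).card ∧
      (fiber (meetFun M N) b).card = (fiber N.toFun b).card := by
  have h1 := fiber_identity M N b
  have h2 := join_fiber_eq hM hN b
  have h3 := join_fiber_eq' hM hN b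
  omega

theorem matGE_meet_left {M N : Matching I} (hM : Stable I M) (hN : Stable I N) :
    matGE I M (meetMat hM hN) := fun a => pge_meetFun_left M N a

theorem matGE_meet_right {M N : Matching I} (hM : Stable I M) (hN : Stable I N) :
    matGE I N (meetMat hM hN) := fun a => pge_meetFun_right M N a

theorem meet_block_core {W W' KM : Matching I} (hW : Stable I W) (hW' : Stable I W')
    (hmem : ∀ a, KM.toFun a = W.toFun a ∨ KM.toFun a = W'.toFun a)
    (hgeW : matGE I W KM)
    (hcard : ∀ b, (fiber KM.toFun b).card = (fiber W.toFun b).card)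
    {a : A} {b : B} (hKa : KM.toFun a = W.toFun a)
    (hpa : I.prefA a (some b) (KM.toFun a))
    {x : Option A} (hx : inPartners I KM b x) (hpb : I.prefB b (some a) x) : False := by
  have hpaW : I.prefA a (some b) (W.toFun a) := by rw [← hKa]; exact hpa
  rcases hx with ⟨a₁, hxe, hKa₁⟩ | ⟨hxe, hsl⟩
  · subst hxe
    by_cases hWa₁ : W.toFun a₁ = some b
    · exact prefB_asymm I hpb (stable_pref_partner hW hpaW _ (inPartners_of_assigned hWa₁))
    · have hW'a₁ : W'.toFun a₁ = some b :=
        ((hmem a₁).resolve_left (fun h => hWa₁ (h ▸ hKa₁))).symm ▸ hKa₁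
      have hne2 : ¬ (fiber W.toFun b ⊆ fiber KM.toFun b) := by
        intro hsub
        have heq : fiber W.toFun b = fiber KM.toFun b :=
          Finset.eq_of_subset_of_card_le hsub (le_of_eq (hcard b))
        have hmem1 : a₁ ∈ fiber KM.toFun b := mem_fiber.mpr hKa₁
        rw [← heq] at hmem1
        exact hWa₁ (mem_fiber.mp hmem1)
      obtain ⟨a2, ha2W, ha2K⟩ := Finset.not_subset.mp hne2
      have ha2Wb : W.toFun a2 = some b := mem_fiber.mp ha2W
      have ha2Kb : KM.toFun a2 ≠ some b := fun h => ha2K (mem_fiber.mpr h)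
      have ha2K' : KM.toFun a2 = W'.toFun a2 :=
        (hmem a2).resolve_left (fun h => ha2Kb (h.trans ha2Wb))
      have hpa2 : I.prefA a2 (some b) (W'.toFun a2) := by
        have hh := hgeW a2
        rw [ha2Wb, ha2K'] at hh
        rcases hh with hh | hh
        · exact absurd (ha2K'.trans hh.symm) ha2Kb
        · exact hh
      have c1 : I.prefB b (some a₁) (some a2) :=
        stable_pref_partner hW' hpa2 _ (inPartners_of_assigned hW'a₁)
      have c2 : I.prefB b (some a2) (some a) :=
        stable_pref_partner hW hpaW _ (inPartners_of_assigned ha2Wb)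
      exact prefB_irrefl I _ (prefB_trans I (prefB_trans I hpb c1) c2)
  · subst hxe
    have hfull := stable_full hW hpaW hpb
    rw [assignedTo_eq_fiber] at hfull
    rw [hasSlack, assignedTo_eq_fiber, hcard b, hfull] at hsl
    exact lt_irrefl _ hsl

theorem meet_stable {M N : Matching I} (hM : Stable I M) (hN : Stable I N) :
    Stable I (meetMat hM hN) := by
  have htf : (meetMat hM hN).toFun = meetFun M N := rfl
  refine ⟨?_, ?_, ?_⟩
  · rintro ⟨a, b, hpa, x, hx, hpb⟩
    rw [htf] at hpa
    by_cases hc : pge I a (M.toFun a) (N.toFun a)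
    · have hKa : (meetMat hM hN).toFun a = N.toFun a := by
        rw [htf]; simp only [meetFun, if_pos hc]
      refine meet_block_core hN hM (fun a' => ?_) (matGE_meet_right hM hN)
        (fun c => (meet_fiber_eq hM hN c).2) hKa (by rw [← htf] at hpa; exact hpa) hx hpb
      · rcases joinFun_cases M N a' with ⟨_, h2⟩ | ⟨_, h2⟩
        · exact Or.inl (htf ▸ h2)
        · exact Or.inr (htf ▸ h2)
    · have hKa : (meetMat hM hN).toFun a = M.toFun a := by
        rw [htf]; simp only [meetFun, if_neg hc]
      refine meet_block_core hM hN (fun a' => ?_) (matGE_meet_left hM hN)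
        (fun c => (meet_fiber_eq hM hN c).1) hKa (by rw [← htf] at hpa; exact hpa) hx hpb
      · rcases joinFun_cases M N a' with ⟨_, h2⟩ | ⟨_, h2⟩
        · exact Or.inr (htf ▸ h2)
        · exact Or.inl (htf ▸ h2)
  · rintro ⟨a, hpa⟩
    rw [BlocksStudent, htf] at hpa
    rcases joinFun_cases M N a with ⟨_, h2⟩ | ⟨_, h2⟩ <;> rw [h2] at hpa
    · have := stable_pge_none hN a
      rcases this with h | h
      · rw [h] at hpa; exact prefA_irrefl I _ hpa
      · exact prefA_asymm I h hpa
    · have := stable_pge_none hM a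
      rcases this with h | h
      · rw [h] at hpa; exact prefA_irrefl I _ hpa
      · exact prefA_asymm I h hpa
  · rintro ⟨b, a, hab, hpb⟩
    rw [htf] at hab
    rcases joinFun_cases M N a with ⟨_, h2⟩ | ⟨_, h2⟩ <;> rw [h2] at hab
    · exact hN.2.2 ⟨b, a, hab, hpb⟩
    · exact hM.2.2 ⟨b, a, hab, hpb⟩

/-- extremal elements in finite sets of matchings. -/
theorem exists_extremal (r : Matching I → Matching I → Prop)
    (htrans : ∀ {X Y Z}, r X Y → r Y Z → r X Z)
    (hanti : ∀ {X Y}, r X Y → r Y X → X = Y)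
    (hrefl : ∀ X, r X X)
    (S : Set (Matching I)) (hne : S.Nonempty) :
    ∃ Z ∈ S, ∀ P ∈ S, r Z P → P = Z := by
  classical
  obtain ⟨X0, hX0⟩ := hne
  have main : ∀ (n : ℕ) (X : Matching I), X ∈ S →
      ({P | P ∈ S ∧ r X P ∧ P ≠ X}.ncard ≤ n) →
      ∃ Z ∈ S, r X Z ∧ ∀ P ∈ S, r Z P → P = Z := by
    intro n
    induction n with
    | zero =>
      intro X hX hcard
      refine ⟨X, hX, hrefl X, fun P hP hge => ?_⟩
      by_contra hne'
      have hmem : P ∈ {P | P ∈ S ∧ r X P ∧ P ≠ X} := ⟨hP, hge, hne'⟩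
      have hpos : 0 < ({P | P ∈ S ∧ r X P ∧ P ≠ X}).ncard :=
        Set.ncard_pos (Set.toFinite _) |>.mpr ⟨P, hmem⟩
      omega
    | succ n ih =>
      intro X hX hcard
      by_cases hmin : ∀ P ∈ S, r X P → P = X
      · exact ⟨X, hX, hrefl X, fun P hP h => hmin P hP h⟩
      · push_neg at hmin
        obtain ⟨P, hP, hXP, hPX⟩ := hmin
        have hsub : {Q | Q ∈ S ∧ r P Q ∧ Q ≠ P} ⊆ {Q | Q ∈ S ∧ r X Q ∧ Q ≠ X} \ {P} := by
          rintro Q ⟨hQ, hPQ, hQP⟩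
          refine ⟨⟨hQ, htrans hXP hPQ, fun hQX => ?_⟩, hQP⟩
          subst hQX
          exact hPX (hanti hXP hPQ).symm
        have hPin : P ∈ {Q | Q ∈ S ∧ r X Q ∧ Q ≠ X} := ⟨hP, hXP, hPX⟩
        have hlt : ({Q | Q ∈ S ∧ r P Q ∧ Q ≠ P}).ncard ≤ n := by
          have h1 : ({Q | Q ∈ S ∧ r P Q ∧ Q ≠ P}).ncard
              ≤ ({Q | Q ∈ S ∧ r X Q ∧ Q ≠ X} \ {P}).ncard :=
            Set.ncard_le_ncard hsub (Set.toFinite _)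
          have h2 : ({Q | Q ∈ S ∧ r X Q ∧ Q ≠ X} \ {P}).ncard
              = ({Q | Q ∈ S ∧ r X Q ∧ Q ≠ X}).ncard - 1 :=
            Set.ncard_diff_singleton_of_mem hPin
          have h3 : 0 < ({Q | Q ∈ S ∧ r X Q ∧ Q ≠ X}).ncard :=
            Set.ncard_pos (Set.toFinite _) |>.mpr ⟨P, hPin⟩
          omega
        obtain ⟨Z, hZ, hPZ, hminZ⟩ := ih P hP hlt
        exact ⟨Z, hZ, htrans hXP hPZ, hminZ⟩
  obtain ⟨Z, hZ, _, hmin⟩ := main ({P | P ∈ S ∧ r X0 P ∧ P ≠ X0}).ncard X0 hX0 le_rfl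
  exact ⟨Z, hZ, hmin⟩

/-- existence of a student-pessimal stable matching. -/
theorem exists_bot (hne : ∃ M : Matching I, Stable I M) :
    ∃ Z, Stable I Z ∧ ∀ P, Stable I P → matGE I P Z := by
  obtain ⟨M1, hM1⟩ := hne
  obtain ⟨Z, hZ, hmin⟩ := exists_extremal (r := matGE I)
    (fun h h' => matGE_trans h h') (fun h h' => matGE_antisymm h h') matGE_refl
    {P | Stable I P} ⟨M1, hM1⟩
  refine ⟨Z, hZ, fun P hP => ?_⟩
  have hK := meet_stable hZ hP
  have h1 : matGE I Z (meetMat hZ hP) := matGE_meet_left hZ hP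
  have h2 : matGE I P (meetMat hZ hP) := matGE_meet_right hZ hP
  have heq := hmin _ hK h1
  rw [← heq]
  exact h2

end Lattice

-- ## chains of immediate predecessors
section Chains
variable {I : SchoolInstance A B}

theorem immPred_stable_left {M' M : Matching I} (h : ImmPred I M' M) : Stable I M' := h.1
theorem immPred_stable_right {M' M : Matching I} (h : ImmPred I M' M) : Stable I M := h.2.1
theorem immPred_matGE {M' M : Matching I} (h : ImmPred I M' M) : matGE I M M' := h.2.2.1.1
theorem immPred_ne {M' M : Matching I} (h : ImmPred I M' M) : M'.toFun ≠ M.toFun := h.2.2.1.2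

theorem chainTo_ne_nil {H M : Matching I} {c : List (Matching I)} (h : chainTo I H M c) :
    c ≠ [] := by
  intro he
  rw [he] at h
  exact absurd h.1 (by simp)

theorem chainTo_get0 {H M : Matching I} {c : List (Matching I)} (h : chainTo I H M c) :
    getElem? c 0 = some H := by
  cases c with
  | nil => exact absurd rfl (chainTo_ne_nil h)
  | cons X l =>
    have := h.1
    simp only [List.head?] at this
    rw [List.getElem?_cons_zero]
    exact this

theorem chainTo_last {H M : Matching I} {c : List (Matching I)} (h : chainTo I H M c) :
    getElem? c (c.length - 1) = some M := by
  rw [← List.getLast?_eq_getElem?]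
  exact h.2.1

theorem chainTo_stable {H M : Matching I} {c : List (Matching I)} (h : chainTo I H M c)
    {Z : Matching I} (hZ : Z ∈ c) : Stable I Z := h.2.2.1 Z hZ

theorem chainTo_step {H M : Matching I} {c : List (Matching I)} (h : chainTo I H M c)
    {i : ℕ} {X Y : Matching I} (hX : getElem? c i = some X) (hY : getElem? c (i + 1) = some Y) :
    ImmPred I Y X := by
  have hch : List.IsChain _ c := h.2.2.2
  rw [List.isChain_iff_getElem] at hch
  obtain ⟨hiX, heX⟩ := List.getElem?_eq_some_iff.mp hX
  obtain ⟨hiY, heY⟩ := List.getElem?_eq_some_iff.mp hY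
  have hlt : i < c.length - 1 := by omega
  have key := hch i (by omega)
  rw [heX, heY] at key
  exact key

theorem chainTo_mono {H M : Matching I} {c : List (Matching I)} (h : chainTo I H M c) :
    ∀ (j i : ℕ) (X Y : Matching I), i ≤ j → getElem? c i = some X → getElem? c j = some Y →
      matGE I X Y := by
  intro j
  induction j with
  | zero =>
    intro i X Y hle hX hY
    interval_cases i
    rw [hX] at hY
    injection hY with hY
    rw [← hY]
    exact matGE_refl X
  | succ j ih =>
    intro i X Y hle hX hY
    rcases Nat.lt_or_ge i (j + 1) with hlt | hge
    · obtain ⟨hjY, _⟩ := List.getElem?_eq_some_iff.mp hY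
      have hj : j < c.length := by omega
      have hW : getElem? c j = some (c.get ⟨j, hj⟩) := List.getElem?_eq_some_iff.mpr ⟨hj, rfl⟩
      have h1 := ih i X _ (by omega) hX hW
      have h2 : ImmPred I Y _ := chainTo_step h hW hY
      exact matGE_trans h1 (immPred_matGE h2)
    · have heq : i = j + 1 := le_antisymm hle hge
      subst heq
      rw [hX] at hY
      injection hY with hY
      rw [← hY]
      exact matGE_refl X

theorem chainTo_mem_ge_last {H M : Matching I} {c : List (Matching I)} (h : chainTo I H M c)
    {Z : Matching I} (hZ : Z ∈ c) : matGE I Z M := by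
  obtain ⟨i, hi⟩ := List.mem_iff_getElem?.mp hZ
  obtain ⟨hilt, _⟩ := List.getElem?_eq_some_iff.mp hi
  exact chainTo_mono h (c.length - 1) i Z M (by omega) hi (chainTo_last h)

theorem chainTo_head_ge_mem {H M : Matching I} {c : List (Matching I)} (h : chainTo I H M c)
    {Z : Matching I} (hZ : Z ∈ c) : matGE I H Z := by
  obtain ⟨i, hi⟩ := List.mem_iff_getElem?.mp hZ
  exact chainTo_mono h i 0 H Z (Nat.zero_le i) (chainTo_get0 h) hi

theorem chainTo_singleton {M : Matching I} (hM : Stable I M) : chainTo I M M [M] := by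
  refine ⟨rfl, rfl, ?_, List.isChain_singleton M⟩
  intro N hN
  rw [List.mem_singleton] at hN
  rw [hN]
  exact hM

/-- existence of maximal chains. -/
theorem chainTo_exists {H M : Matching I} (hH : Stable I H) (hM : Stable I M)
    (hge : matGE I H M) : ∃ c, chainTo I H M c := by
  have main : ∀ (n : ℕ) (H : Matching I), Stable I H → matGE I H M →
      ({P : Matching I | Stable I P ∧ matGE I H P ∧ P ≠ H}.ncard ≤ n) →
      ∃ c, chainTo I H M c := by
    intro n
    induction n with
    | zero =>
      intro H hH hge hcard
      by_cases he : M = H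
      · subst he
        exact ⟨[M], chainTo_singleton hH⟩
      · exfalso
        have hmem : M ∈ {P : Matching I | Stable I P ∧ matGE I H P ∧ P ≠ H} := ⟨hM, hge, he⟩
        have hpos : 0 < ({P : Matching I | Stable I P ∧ matGE I H P ∧ P ≠ H}).ncard :=
          Set.ncard_pos (Set.toFinite _) |>.mpr ⟨M, hmem⟩
        omega
    | succ n ih =>
      intro H hH hge hcard
      by_cases he : M = H
      · subst he
        exact ⟨[M], chainTo_singleton hH⟩
      · set T : Set (Matching I) :=
          {Z | Stable I Z ∧ matGE I H Z ∧ matGE I Z M ∧ Z ≠ H} with hT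
        have hMT : M ∈ T := ⟨hM, hge, matGE_refl M, he⟩
        obtain ⟨Z, hZT, hmax⟩ := exists_extremal (r := fun X Y => matGE I Y X)
          (fun h h' => matGE_trans h' h) (fun h h' => matGE_antisymm h' h)
          matGE_refl T ⟨M, hMT⟩
        have hImm : ImmPred I Z H := by
          refine ⟨hZT.1, hH, ⟨hZT.2.1, fun heq => hZT.2.2.2 (Matching.ext' heq)⟩, ?_⟩
        -- no matching strictly between Z and H
          rintro ⟨M'', hM'', ⟨hge1, hne1⟩, ⟨hge2, hne2⟩⟩
          have hMT'' : M'' ∈ T := by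
            refine ⟨hM'', hge2, matGE_trans hge1 hZT.2.2.1, fun hMH => ?_⟩
            rw [hMH] at hne2
            exact hne2 rfl
          have heq := hmax M'' hMT'' hge1
          rw [heq] at hne1
          exact hne1 rfl
        have hcZ : ({P : Matching I | Stable I P ∧ matGE I Z P ∧ P ≠ Z}).ncard ≤ n := by
          have hsub : {P : Matching I | Stable I P ∧ matGE I Z P ∧ P ≠ Z}
              ⊆ {P : Matching I | Stable I P ∧ matGE I H P ∧ P ≠ H} \ {Z} := by
            rintro P ⟨hP, hgeP, hPne⟩
            refine ⟨⟨hP, matGE_trans hZT.2.1 hgeP, fun hPH => hZT.2.2.2 ?_⟩, hPne⟩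
            rw [← hPH]
            exact matGE_antisymm hgeP (by rw [hPH]; exact hZT.2.1)
          have hZin : Z ∈ {P : Matching I | Stable I P ∧ matGE I H P ∧ P ≠ H} :=
            ⟨hZT.1, hZT.2.1, hZT.2.2.2⟩
          have h1 := Set.ncard_le_ncard hsub (Set.toFinite _)
          have h2 := Set.ncard_diff_singleton_of_mem hZin
          have h3 : 0 < ({P : Matching I | Stable I P ∧ matGE I H P ∧ P ≠ H}).ncard :=
            Set.ncard_pos (Set.toFinite _) |>.mpr ⟨Z, hZin⟩
          omega
        obtain ⟨c, hc⟩ := ih Z hZT.1 hZT.2.2.1 hcZ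
        refine ⟨H :: c, ?_, ?_, ?_, ?_⟩
        · rfl
        · rw [List.getLast?_cons]
          rw [hc.2.1]
          rfl
        · intro N hN
          rcases List.mem_cons.mp hN with rfl | hN
          · exact hH
          · exact chainTo_stable hc hN
        · show List.IsChain _ _
          rw [List.isChain_cons]
          refine ⟨?_, hc.2.2.2⟩
          intro y hy
          rw [Option.mem_def, hc.1] at hy
          injection hy with hy
          rw [hy] at hImm
          exact hImm
  exact main _ H hH hge le_rfl

theorem chainTo_append {H X Y Z : Matching I} {c e : List (Matching I)}
    (h1 : chainTo I H X c) (h2 : chainTo I Y Z e) (him : ImmPred I Y X) :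
    chainTo I H Z (c ++ e) := by
  have hc := chainTo_ne_nil h1
  have he := chainTo_ne_nil h2
  refine ⟨?_, ?_, ?_, ?_⟩
  · rw [List.head?_append, h1.1]
    rfl
  · rw [List.getLast?_append, h2.2.1]
    rfl
  · intro N hN
    rcases List.mem_append.mp hN with hN | hN
    · exact chainTo_stable h1 hN
    · exact chainTo_stable h2 hN
  · show List.IsChain _ _
    rw [List.isChain_append]
    refine ⟨h1.2.2.2, h2.2.2.2, ?_⟩
    intro x hx y hy
    rw [Option.mem_def, h1.2.1] at hx
    rw [Option.mem_def, h2.1] at hy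
    injection hx with hx
    injection hy with hy
    rw [← hx, ← hy]
    exact him

theorem chainTo_append_junction {H X Y Z : Matching I} {c e : List (Matching I)}
    (h1 : chainTo I H X c) (h2 : chainTo I Y Z e) :
    getElem? (c ++ e) (c.length - 1) = some X ∧ getElem? (c ++ e) (c.length) = some Y := by
  have hc := chainTo_ne_nil h1
  have hpos : 0 < c.length := List.length_pos_iff.mpr hc
  constructor
  · rw [List.getElem?_append_left (by omega)]
    exact chainTo_last h1
  · rw [List.getElem?_append_right (le_refl _)]
    rw [Nat.sub_self]
    exact chainTo_get0 h2

theorem rho_mem_chainRots_append {H X Y Z : Matching I} {c e : List (Matching I)}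
    (h1 : chainTo I H X c) (h2 : chainTo I Y Z e) :
    rho I X Y ∈ chainRots I (c ++ e) := by
  obtain ⟨hX, hY⟩ := chainTo_append_junction h1 h2
  have hpos : 0 < c.length := List.length_pos_iff.mpr (chainTo_ne_nil h1)
  refine ⟨c.length - 1, X, Y, hX, ?_, rfl⟩
  rw [show c.length - 1 + 1 = c.length by omega]
  exact hY

theorem chainRots_elim {H M : Matching I} {c : List (Matching I)} (h : chainTo I H M c)
    {r : Rot A B} (hr : r ∈ chainRots I c) :
    ∃ (i : ℕ) (X Y : Matching I), getElem? c i = some X ∧ getElem? c (i + 1) = some Y ∧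
      ImmPred I Y X ∧ r = rho I X Y := by
  obtain ⟨i, X, Y, hX, hY, hrr⟩ := hr
  exact ⟨i, X, Y, hX, hY, chainTo_step h hX hY, hrr⟩

end Chains

-- ## rotations and their pairs
section Rots
variable {I : SchoolInstance A B}

theorem pairsOf_student_mem {M : Matching I} {a : A} {x : Option B} :
    (some a, x) ∈ pairsOf I M ↔ x = M.toFun a := by
  constructor
  · intro h
    simp only [pairsOf, Finset.mem_filter] at h
    rcases h.2 with ⟨a', he⟩ | ⟨b, _, he⟩
    · rw [Prod.ext_iff] at he
      obtain ⟨he1, he2⟩ := he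
      injection he1 with he1
      rw [he1]
      exact he2
    · rw [Prod.ext_iff] at he
      exact absurd he.1 (by simp)
  · intro h
    simp only [pairsOf, Finset.mem_filter]
    exact ⟨Finset.mem_univ _, Or.inl ⟨a, by rw [h]⟩⟩

theorem mem_rho_fst {M M' : Matching I} {a : A} {b : B} :
    (some a, some b) ∈ (rho I M M').1 ↔ M.toFun a = some b ∧ M'.toFun a ≠ some b := by
  show (some a, some b) ∈ pairsOf I M \ pairsOf I M' ↔ _
  rw [Finset.mem_sdiff, pairsOf_student_mem, pairsOf_student_mem]
  constructor
  · exact fun ⟨h1, h2⟩ => ⟨h1.symm, fun h => h2 h.symm⟩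
  · exact fun ⟨h1, h2⟩ => ⟨h1.symm, fun h => h2 h.symm⟩

/-- crossing step along a chain. -/
theorem chain_crossing {H M : Matching I} {c : List (Matching I)} (h : chainTo I H M c)
    (p : Matching I → Prop) (hhead : p H) (hlast : ¬ p M) :
    ∃ (i : ℕ) (P Q : Matching I), getElem? c i = some P ∧ getElem? c (i + 1) = some Q ∧ p P ∧ ¬ p Q := by
  have main : ∀ (c : List (Matching I)) (H : Matching I), chainTo I H M c → p H → ¬ p M →
      ∃ (i : ℕ) (P Q : Matching I),
        getElem? c i = some P ∧ getElem? c (i + 1) = some Q ∧ p P ∧ ¬ p Q := by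
    intro c
    induction c with
    | nil => intro H hc _ _; exact absurd rfl (chainTo_ne_nil hc)
    | cons X l ih =>
      intro H hc hH hMn
      have hXH : X = H := by
        have := hc.1
        simp only [List.head?] at this
        injection this
      cases l with
      | nil =>
        exfalso
        have hlast : M = X := by
          have := hc.2.1
          simp only [List.getLast?] at this
          injection this with this
          exact this.symm
        rw [hlast, hXH] at hMn
        exact hMn hH
      | cons Y l' =>
        by_cases hpY : p Y
        · have htail : chainTo I Y M (Y :: l') := by
            refine ⟨rfl, ?_, ?_, ?_⟩
            · rw [← List.getLast?_cons_cons]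
              exact hc.2.1
            · intro N hN
              exact hc.2.2.1 N (List.mem_cons_of_mem X hN)
            · exact List.IsChain.tail hc.2.2.2
          obtain ⟨i, P, Q, h1', h2', h3', h4'⟩ := ih Y htail hpY hMn
          exact ⟨i + 1, P, Q, h1', h2', h3', h4'⟩
        · exact ⟨0, X, Y, rfl, rfl, hXH ▸ hH, hpY⟩
  exact main c H h hhead hlast

/-- at most one step of a chain moves student `a` away from school `b`. -/
theorem aLeaves_unique {H M : Matching I} {c : List (Matching I)} (h : chainTo I H M c)
    {a : A} {b : B} {i j : ℕ} {P Q P' Q' : Matching I}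
    (hP : getElem? c i = some P) (hQ : getElem? c (i + 1) = some Q)
    (hP' : getElem? c j = some P') (hQ' : getElem? c (j + 1) = some Q')
    (hPb : P.toFun a = some b) (hQb : Q.toFun a ≠ some b)
    (hP'b : P'.toFun a = some b) (hQ'b : Q'.toFun a ≠ some b) : i = j := by
  have key : ∀ (i' j' : ℕ) (P1 Q1 P1' : Matching I), getElem? c i' = some P1 →
      getElem? c (i' + 1) = some Q1 → getElem? c j' = some P1' → i' < j' →
      P1.toFun a = some b → Q1.toFun a ≠ some b → P1'.toFun a = some b → False := by
    intro i' j' P1 Q1 P1' hP1 hQ1 hP1' hlt hP1b hQ1b hP1'b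
    have hge : matGE I Q1 P1' := chainTo_mono h j' (i' + 1) Q1 P1' (by omega) hQ1 hP1'
    have hstep : ImmPred I Q1 P1 := chainTo_step h hP1 hQ1
    have hpge : pge I a (P1.toFun a) (Q1.toFun a) := immPred_matGE hstep a
    rw [hP1b] at hpge
    have hstrict : I.prefA a (some b) (Q1.toFun a) := by
      rcases hpge with h' | h'
      · exact absurd h'.symm hQ1b
      · exact h'
    have h2 : pge I a (Q1.toFun a) (some b) := by
      have := hge a
      rw [hP1'b] at this
      exact this
    rcases h2 with h' | h'
    · exact hQ1b h'
    · exact prefA_asymm I hstrict h'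
  rcases lt_trichotomy i j with hlt | heq | hlt
  · exact absurd (key i j P Q P' hP hQ hP' hlt hPb hQb hP'b) id
  · exact heq
  · exact absurd (key j i P' Q' P hP' hQ' hP hlt hP'b hQ'b hPb) id

end Rots

-- ## core rotation lemmas (with the poset hypotheses)
section Core
variable {I : SchoolInstance A B} {M0 : Matching I}

/-- a rotation containing the pair `(a,b)` is unique. -/
theorem rot_unique (hM0s : Stable I M0) (hM0top : ∀ N, Stable I N → matGE I M0 N)
    (RM : Matching I → Set (Rot A B))
    (hRM : ∀ M c, Stable I M → chainTo I M0 M c → RM M = chainRots I c)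
    {r r'' : Rot A B} (hr : r ∈ RotSet I) (hr'' : r'' ∈ RotSet I)
    {a : A} {b : B} (h1 : (some a, some b) ∈ r.1) (h2 : (some a, some b) ∈ r''.1) :
    r = r'' := by
  obtain ⟨Mz, hMzs, hMzbot⟩ := exists_bot (I := I) ⟨M0, hM0s⟩
  obtain ⟨X, Y, hImmX, hreX⟩ := hr
  obtain ⟨X', Y', hImmX', hreX'⟩ := hr''
  obtain ⟨cX, hcX⟩ := chainTo_exists hM0s (immPred_stable_right hImmX)
    (hM0top X (immPred_stable_right hImmX))
  obtain ⟨eY, heY⟩ := chainTo_exists (immPred_stable_left hImmX) hMzs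
    (hMzbot Y (immPred_stable_left hImmX))
  obtain ⟨cX', hcX'⟩ := chainTo_exists hM0s (immPred_stable_right hImmX')
    (hM0top X' (immPred_stable_right hImmX'))
  obtain ⟨eY', heY'⟩ := chainTo_exists (immPred_stable_left hImmX') hMzs
    (hMzbot Y' (immPred_stable_left hImmX'))
  have hd1 : chainTo I M0 Mz (cX ++ eY) := chainTo_append hcX heY hImmX
  have hd2 : chainTo I M0 Mz (cX' ++ eY') := chainTo_append hcX' heY' hImmX'
  have hrots : chainRots I (cX ++ eY) = chainRots I (cX' ++ eY') := by
    rw [← hRM Mz _ hMzs hd1, ← hRM Mz _ hMzs hd2]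
  have hr''mem : r'' ∈ chainRots I (cX ++ eY) := by
    rw [hrots, hreX']
    exact rho_mem_chainRots_append hcX' heY'
  obtain ⟨j, P', Q', hgP', hgQ', hstep', hre'⟩ := chainRots_elim hd1 hr''mem
  rw [hre'] at h2
  rw [mem_rho_fst] at h2
  -- the junction step of d1:
  obtain ⟨hgX, hgY0⟩ := chainTo_append_junction hcX heY
  have hposX : 0 < cX.length := List.length_pos_iff.mpr (chainTo_ne_nil hcX)
  have hgY : getElem? (cX ++ eY) (cX.length - 1 + 1) = some Y := by
    rw [show cX.length - 1 + 1 = cX.length by omega]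
    exact hgY0
  rw [hreX] at h1
  rw [mem_rho_fst] at h1
  have hij : cX.length - 1 = j :=
    aLeaves_unique hd1 hgX hgY hgP' hgQ' h1.1 h1.2 h2.1 h2.2
  rw [← hij] at hgP' hgQ'
  rw [hgX] at hgP'
  rw [hgY] at hgQ'
  injection hgP' with hgP'
  injection hgQ' with hgQ'
  rw [hreX, hre', ← hgP', ← hgQ']

/-- Core lemma: if `(a,b) ∈ ρ₊` and the stable matching `M` gives `a` something
worse than `b`, then `ρ ∈ R_M`. -/
theorem rot_mem_RM (hM0s : Stable I M0) (hM0top : ∀ N, Stable I N → matGE I M0 N)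
    (RM : Matching I → Set (Rot A B))
    (hRM : ∀ M c, Stable I M → chainTo I M0 M c → RM M = chainRots I c)
    {r : Rot A B} (hr : r ∈ RotSet I)
    {a : A} {b : B} (hab : (some a, some b) ∈ r.1)
    {M : Matching I} (hM : Stable I M) (hpa : I.prefA a (some b) (M.toFun a)) :
    r ∈ RM M := by
  obtain ⟨Mz, hMzs, hMzbot⟩ := exists_bot (I := I) ⟨M0, hM0s⟩
  obtain ⟨X, Y, hImmX, hreX⟩ := hr
  have habX : X.toFun a = some b ∧ Y.toFun a ≠ some b := by
    rw [hreX, mem_rho_fst] at hab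
    exact hab
  obtain ⟨cM, hcM⟩ := chainTo_exists hM0s hM (hM0top M hM)
  -- crossing step in cM
  have hhead : pge I a (M0.toFun a) (some b) := by
    have := hM0top X (immPred_stable_right hImmX) a
    rw [habX.1] at this
    exact this
  have hlast : ¬ pge I a (M.toFun a) (some b) := (not_pge_iff I).mpr hpa
  obtain ⟨i, P, Q, hgP, hgQ, hpP, hpQ⟩ :=
    chain_crossing hcM (fun Z => pge I a (Z.toFun a) (some b)) hhead hlast
  have hstepPQ : ImmPred I Q P := chainTo_step hcM hgP hgQ
  have hPst : Stable I P := immPred_stable_right hstepPQ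
  have hQst : Stable I Q := immPred_stable_left hstepPQ
  -- merge chains through (P, Q) and (X, Y) down to Mz
  obtain ⟨cP, hcP⟩ := chainTo_exists hM0s hPst (hM0top P hPst)
  obtain ⟨eQ, heQ⟩ := chainTo_exists hQst hMzs (hMzbot Q hQst)
  obtain ⟨cX, hcX⟩ := chainTo_exists hM0s (immPred_stable_right hImmX)
    (hM0top X (immPred_stable_right hImmX))
  obtain ⟨eY, heY⟩ := chainTo_exists (immPred_stable_left hImmX) hMzs
    (hMzbot Y (immPred_stable_left hImmX))
  have hd1 : chainTo I M0 Mz (cP ++ eQ) := chainTo_append hcP heQ hstepPQ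
  have hd2 : chainTo I M0 Mz (cX ++ eY) := chainTo_append hcX heY hImmX
  have hrots : chainRots I (cP ++ eQ) = chainRots I (cX ++ eY) := by
    rw [← hRM Mz _ hMzs hd1, ← hRM Mz _ hMzs hd2]
  have hrmem : r ∈ chainRots I (cP ++ eQ) := by
    rw [hrots, hreX]
    exact rho_mem_chainRots_append hcX heY
  obtain ⟨j, P₂, Q₂, hgP₂, hgQ₂, hstep₂, hre₂⟩ := chainRots_elim hd1 hrmem
  have hab₂ : P₂.toFun a = some b ∧ Q₂.toFun a ≠ some b := by
    rw [hre₂, mem_rho_fst] at hab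
    exact hab
  have hPmem2 : P₂ ∈ cP ++ eQ := List.mem_iff_getElem?.mpr ⟨j, hgP₂⟩
  have hPa : P.toFun a = some b := by
    rcases List.mem_append.mp hPmem2 with hin | hin
    · have hge := chainTo_mem_ge_last hcP hin a
      rw [hab₂.1] at hge
      exact pge_antisymm I hpP hge
    · exfalso
      have hge := chainTo_head_ge_mem heQ hin a
      rw [hab₂.1] at hge
      exact hpQ hge
  have hQa : Q.toFun a ≠ some b := fun h => hpQ (by rw [h]; exact pge_refl I a _)
  obtain ⟨hgPj, hgQj0⟩ := chainTo_append_junction hcP heQ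
  have hposP : 0 < cP.length := List.length_pos_iff.mpr (chainTo_ne_nil hcP)
  have hgQj : getElem? (cP ++ eQ) (cP.length - 1 + 1) = some Q := by
    rw [show cP.length - 1 + 1 = cP.length by omega]
    exact hgQj0
  have hij : j = cP.length - 1 :=
    aLeaves_unique hd1 hgP₂ hgQ₂ hgPj hgQj hab₂.1 hab₂.2 hPa hQa
  rw [hij] at hgP₂ hgQ₂
  rw [hgPj] at hgP₂
  rw [hgQj] at hgQ₂
  injection hgP₂ with hgP₂
  injection hgQ₂ with hgQ₂
  rw [hRM M cM hM hcM]
  exact ⟨i, P, Q, hgP, hgQ, by rw [hre₂, hgP₂, hgQ₂]⟩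

/-- if `(a,b) ∈ ρ₊` and `ρ ∈ R_M` then `a` is worse off than `b` in `M`. -/
theorem pref_of_mem_RM (hM0s : Stable I M0) (hM0top : ∀ N, Stable I N → matGE I M0 N)
    (RM : Matching I → Set (Rot A B))
    (hRM : ∀ M c, Stable I M → chainTo I M0 M c → RM M = chainRots I c)
    {r : Rot A B} {a : A} {b : B} (hab : (some a, some b) ∈ r.1)
    {M : Matching I} (hM : Stable I M) (hmem : r ∈ RM M) :
    I.prefA a (some b) (M.toFun a) := by
  obtain ⟨cM, hcM⟩ := chainTo_exists hM0s hM (hM0top M hM)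
  rw [hRM M cM hM hcM] at hmem
  obtain ⟨i, X, Y, hgX, hgY, hstep, hre⟩ := chainRots_elim hcM hmem
  rw [hre, mem_rho_fst] at hab
  have hstrict : I.prefA a (some b) (Y.toFun a) := by
    have hp := immPred_matGE hstep a
    rw [hab.1] at hp
    rcases hp with h | h
    · exact absurd h.symm hab.2
    · exact h
  have hgeYM : matGE I Y M := by
    obtain ⟨hlt, _⟩ := List.getElem?_eq_some_iff.mp hgY
    exact chainTo_mono hcM (cM.length - 1) (i + 1) Y M (by omega) hgY (chainTo_last hcM)
  exact prefA_of_prefA_of_pge I hstrict (hgeYM a)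

end Core
/-- comparability of intersecting rotations. -/
theorem stmt13 (I : SchoolInstance A B) (M0 : Matching I)
    (hM0 : Stable I M0 ∧ ∀ N, Stable I N → matGE I M0 N)
    (RM : Matching I → Set (Rot A B))
    (hRM : ∀ M c, Stable I M → chainTo I M0 M c → RM M = chainRots I c)
    (r r' : Rot A B) (hr : r ∈ RotSet I) (hr' : r' ∈ RotSet I) (hne : r ≠ r') :
    (∀ a : A, a ∈ Aof r → a ∈ Aof r' →
      (domRel I RM r r' ∨ domRel I RM r' r) ∧
      (∀ b b' : B, (some a, some b) ∈ r.1 → (some a, some b') ∈ r'.1 →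
        (strictDom I RM r r' ↔ I.prefA a (some b) (some b')))) ∧
    (∀ b : B, b ∈ Bof r → b ∈ Bof r' →
      (domRel I RM r r' ∨ domRel I RM r' r) ∧
      (strictDom I RM r r' ↔
        ∀ a ∈ rhoPlusB r b, ∀ a' ∈ rhoPlusB r' b, I.prefB b (some a') (some a))) := by
  obtain ⟨hM0s, hM0top⟩ := hM0
  -- strict domination implies the student-side preference
  have hS2P : ∀ (s s' : Rot A B), s' ∈ RotSet I →
      strictDom I RM s s' → ∀ (a : A) (c c' : B), (some a, some c) ∈ s.1 →
      (some a, some c') ∈ s'.1 → I.prefA a (some c) (some c') := by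
    intro s s' hs' hsd a c c' hc hc'
    obtain ⟨Xp, Yp, hImp, hrep⟩ := hs'
    have hexp : Exposed I s' Xp := ⟨Yp, hImp, hrep⟩
    have hmem : s ∈ RM Xp := (hsd.1.resolve_left hsd.2) Xp (immPred_stable_right hImp) hexp
    have hXa : Xp.toFun a = some c' := by
      rw [hrep, mem_rho_fst] at hc'
      exact hc'.1
    have hfin := pref_of_mem_RM hM0s hM0top RM hRM hc (immPred_stable_right hImp) hmem
    rw [hXa] at hfin
    exact hfin
  -- student-side preference implies domination
  have hP2D : ∀ (s s' : Rot A B), s ∈ RotSet I →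
      ∀ (a : A) (c c' : B), (some a, some c) ∈ s.1 → (some a, some c') ∈ s'.1 →
      I.prefA a (some c) (some c') →
      ∀ M, Stable I M → Exposed I s' M → s ∈ RM M := by
    intro s s' hs a c c' hc hc' hp M hM hexp
    obtain ⟨M₂, hImp, hre⟩ := hexp
    have hMa : M.toFun a = some c' := by
      rw [hre, mem_rho_fst] at hc'
      exact hc'.1
    exact rot_mem_RM hM0s hM0top RM hRM hs hc hM (by rw [hMa]; exact hp)
  -- school-side preference (one pair) implies domination
  have hP2DS : ∀ (s s' : Rot A B), s ∈ RotSet I → s ≠ s' →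
      ∀ (aa aa' : A) (bb : B), (some aa, some bb) ∈ s.1 → (some aa', some bb) ∈ s'.1 →
      I.prefB bb (some aa') (some aa) →
      ∀ M, Stable I M → Exposed I s' M → s ∈ RM M := by
    intro s s' hs hss' aa aa' bb hca hca' hp M hM hexp
    obtain ⟨M₂, hImp, hre⟩ := hexp
    have h1 : M.toFun aa' = some bb ∧ M₂.toFun aa' ≠ some bb := by
      rw [hre, mem_rho_fst] at hca'
      exact hca'
    rcases prefA_tricho I (a := aa) (some bb) (M.toFun aa) with hlt | heqq | hgt
    · exact rot_mem_RM hM0s hM0top RM hRM hs hca hM hlt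
    · by_cases h2 : M₂.toFun aa = some bb
      · exfalso
        have hpa' : I.prefA aa' (some bb) (M₂.toFun aa') := by
          have hq := immPred_matGE hImp aa'
          rw [h1.1] at hq
          rcases hq with h | h
          · exact absurd h.symm h1.2
          · exact h
        have hcontr := stable_pref_partner (immPred_stable_left hImp) hpa' (some aa)
          (inPartners_of_assigned h2)
        exact prefB_asymm I hcontr hp
      · exfalso
        have hmem' : (some aa, some bb) ∈ s'.1 := by
          rw [hre, mem_rho_fst]
          exact ⟨heqq.symm, h2⟩
        have hs'' : s' ∈ RotSet I := ⟨M, M₂, hImp, hre⟩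
        exact hss' (rot_unique hM0s hM0top RM hRM hs hs'' hca hmem')
    · obtain ⟨Mz, hMzs, hMzbot⟩ := exists_bot (I := I) ⟨M0, hM0s⟩
      obtain ⟨Xs, Ys, hImms, hres⟩ := hs
      obtain ⟨cM, hcM⟩ := chainTo_exists hM0s hM (hM0top M hM)
      obtain ⟨eM₂, heM₂⟩ := chainTo_exists (immPred_stable_left hImp) hMzs
        (hMzbot M₂ (immPred_stable_left hImp))
      obtain ⟨cXs, hcXs⟩ := chainTo_exists hM0s (immPred_stable_right hImms)
        (hM0top Xs (immPred_stable_right hImms))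
      obtain ⟨eYs, heYs⟩ := chainTo_exists (immPred_stable_left hImms) hMzs
        (hMzbot Ys (immPred_stable_left hImms))
      have hd1 : chainTo I M0 Mz (cM ++ eM₂) := chainTo_append hcM heM₂ hImp
      have hd2 : chainTo I M0 Mz (cXs ++ eYs) := chainTo_append hcXs heYs hImms
      have hrots : chainRots I (cM ++ eM₂) = chainRots I (cXs ++ eYs) := by
        rw [← hRM Mz _ hMzs hd1, ← hRM Mz _ hMzs hd2]
      have hsmem : s ∈ chainRots I (cM ++ eM₂) := by
        rw [hrots, hres]
        exact rho_mem_chainRots_append hcXs heYs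
      obtain ⟨j, P, Q, hgP, hgQ, hstep, hre2⟩ := chainRots_elim hd1 hsmem
      have habP : P.toFun aa = some bb ∧ Q.toFun aa ≠ some bb := by
        rw [hre2, mem_rho_fst] at hca
        exact hca
      have hPmem : P ∈ cM ++ eM₂ := List.mem_iff_getElem?.mpr ⟨j, hgP⟩
      rcases List.mem_append.mp hPmem with hin | hin
      · exfalso
        have hge := chainTo_mem_ge_last hcM hin aa
        rw [habP.1] at hge
        exact prefA_irrefl I _ (prefA_of_pge_of_prefA I hge hgt)
      · exfalso
        have hPst : Stable I P := chainTo_stable hd1 hPmem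
        have hpa' : I.prefA aa' (some bb) (P.toFun aa') := by
          have hq := immPred_matGE hImp aa'
          rw [h1.1] at hq
          have hq2 : I.prefA aa' (some bb) (M₂.toFun aa') := by
            rcases hq with h | h
            · exact absurd h.symm h1.2
            · exact h
          exact prefA_of_prefA_of_pge I hq2 (chainTo_head_ge_mem heM₂ hin aa')
        have hcontr := stable_pref_partner hPst hpa' (some aa)
          (inPartners_of_assigned habP.1)
        exact prefB_asymm I hcontr hp
  -- strict domination implies the school-side preference (all pairs)
  have hS2PS : ∀ (s s' : Rot A B), s' ∈ RotSet I → strictDom I RM s s' →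
      ∀ (bb : B) (aa aa' : A), (some aa, some bb) ∈ s.1 → (some aa', some bb) ∈ s'.1 →
      I.prefB bb (some aa') (some aa) := by
    intro s s' hs' hsd bb aa aa' hca hca'
    obtain ⟨Xp, Yp, hImp, hrep⟩ := hs'
    have hmem : s ∈ RM Xp :=
      (hsd.1.resolve_left hsd.2) Xp (immPred_stable_right hImp) ⟨Yp, hImp, hrep⟩
    have hMa' : Xp.toFun aa' = some bb := by
      rw [hrep, mem_rho_fst] at hca'
      exact hca'.1
    have hpa := pref_of_mem_RM hM0s hM0top RM hRM hca (immPred_stable_right hImp) hmem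
    exact stable_pref_partner (immPred_stable_right hImp) hpa (some aa')
      (inPartners_of_assigned hMa')
  constructor
  · intro a haA haA'
    obtain ⟨b1, hb1⟩ := haA
    obtain ⟨b1', hb1'⟩ := haA'
    constructor
    · rcases prefA_tricho I (a := a) (some b1) (some b1') with hp | hp | hp
      · exact Or.inl (Or.inr (hP2D r r' hr a b1 b1' hb1 hb1' hp))
      · exfalso
        injection hp with hp
        rw [← hp] at hb1'
        exact hne (rot_unique hM0s hM0top RM hRM hr hr' hb1 hb1')
      · exact Or.inr (Or.inr (hP2D r' r hr' a b1' b1 hb1' hb1 hp))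
    · intro b b' hbb hbb'
      constructor
      · intro hsd
        exact hS2P r r' hr' hsd a b b' hbb hbb'
      · intro hp
        exact ⟨Or.inr (hP2D r r' hr a b b' hbb hbb' hp), hne⟩
  · intro b hbB hbB'
    obtain ⟨a1, ha1⟩ := hbB
    obtain ⟨a1', ha1'⟩ := hbB'
    constructor
    · rcases prefB_tricho I (b := b) (some a1') (some a1) with hp | hp | hp
      · exact Or.inl (Or.inr (hP2DS r r' hr hne a1 a1' b ha1 ha1' hp))
      · exfalso
        injection hp with hp
        rw [hp] at ha1'
        exact hne (rot_unique hM0s hM0top RM hRM hr hr' ha1 ha1')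
      · exact Or.inr (Or.inr (hP2DS r' r hr' (Ne.symm hne) a1' a1 b ha1' ha1 hp))
    · constructor
      · intro hsd aa haa aa' haa'
        exact hS2PS r r' hr' hsd b aa aa' haa haa'
      · intro hall
        exact ⟨Or.inr (hP2DS r r' hr hne a1 a1' b ha1 ha1' (hall a1 ha1 a1' ha1')), hne⟩

end SM
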